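/- Let S ⊆ Q₀ be the set of source vertices of Q (vertices that are the target of no arrow). For every monic representation X ∈ Mon(Q,A) there is a short exact sequence 0 → ⊕_{i∈S} m_i(X_i) → X → Z → 0 in Rep(Q,A), where the morphism into X is given at each vertex j by the maps X_p over all paths p starting at a source vertex and ending at j, such that the cokernel Z is again a monic representation and moreover Z_i = 0 for every source vertex i ∈ S. -/

import Mathlib

open CategoryTheory Limits

variable (A : Type) [Ring A]
variable (V : Type) [Quiver.{0} V] [Fintype V] [∀ i j : V, Fintype (i ⟶ j)]
  [∀ i j : V, Fintype (Quiver.Path i j)]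

/-- The category `Rep(Q,A)` of representations of the quiver `Q` over `A`. -/
abbrev QRep := Paths V ⥤ ModuleCat.{0} A

/-- The canonical map `δ_i(X) : ⊕_{α : e(α) = i} X_{s(α)} → X_i`. -/
noncomputable def deltaMap (X : QRep A V) (i : V) :
    (∀ a : (Σ j : V, j ⟶ i), X.obj ((Paths.of V).obj a.1)) →ₗ[A] X.obj ((Paths.of V).obj i) where
  toFun v := ∑ a : (Σ j : V, j ⟶ i), X.map a.2.toPath (v a)
  map_add' u v := by
    simp only [Pi.add_apply]
    exact (Finset.sum_congr rfl fun a _ => map_add _ (u a) (v a)).trans Finset.sum_add_distrib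
  map_smul' c v := by
    simp only [Pi.smul_apply, RingHom.id_apply]
    exact (Finset.sum_congr rfl fun a _ => map_smul _ c (v a)).trans Finset.smul_sum.symm

/-- A representation is monic if each `δ_i(X)` is injective. -/
def IsMonicRep (X : QRep A V) : Prop :=
  ∀ i : V, Function.Injective (deltaMap A V X i)

/-- A representation is finite-dimensional if each branch is a finite `A`-module. -/
def IsFinRep (X : QRep A V) : Prop :=
  ∀ i : V, Module.Finite A (X.obj ((Paths.of V).obj i))

/-- The monomorphism category `Mon(Q,A)`: finite-dimensional monic representations. -/
abbrev MonRep := ObjectProperty.FullSubcategory (fun X : QRep A V => IsMonicRep A V X ∧ IsFinRep A V X)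

/-- `m_i(M) = P(i) ⊗_k M`. -/
noncomputable def mObj (i : V) (M : ModuleCat.{0} A) : QRep A V where
  obj j := ModuleCat.of A (((Paths.of V).obj i ⟶ j) →₀ M)
  map {j l} q := ModuleCat.ofHom (Finsupp.lmapDomain M A (fun p => p ≫ q))
  map_id j := by
    have h : (fun p : (Paths.of V).obj i ⟶ j => p ≫ 𝟙 j) = id := by
      funext p; simp
    show ModuleCat.ofHom (Finsupp.lmapDomain (↑M) A (fun p : (Paths.of V).obj i ⟶ j => p ≫ 𝟙 j)) = _
    rw [h, Finsupp.lmapDomain_id]; rfl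
  map_comp {j l r} q q' := by
    have h : (fun p : (Paths.of V).obj i ⟶ j => p ≫ (q ≫ q'))
        = (fun p' : (Paths.of V).obj i ⟶ l => p' ≫ q') ∘ (fun p => p ≫ q) := by
      funext p; simp
    show ModuleCat.ofHom (Finsupp.lmapDomain (↑M) A (fun p : (Paths.of V).obj i ⟶ j => p ≫ (q ≫ q'))) = _
    rw [h, Finsupp.lmapDomain_comp]; rfl

/-- The functor `m_i : A-mod → Rep(Q,A)`, `M ↦ P(i) ⊗_k M`. -/
noncomputable def mFunctor (i : V) : ModuleCat.{0} A ⥤ QRep A V where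
  obj M := mObj A V i M
  map {M N} φ :=
    { app := fun j => ModuleCat.ofHom (Finsupp.mapRange.linearMap (α := ((Paths.of V).obj i ⟶ j)) φ.hom)
      naturality := fun j l q => by
        apply ModuleCat.hom_ext
        apply Finsupp.lhom_ext
        intro p m
        show Finsupp.mapRange.linearMap φ.hom (Finsupp.mapDomain (fun p' => p' ≫ q) (Finsupp.single p m))
          = Finsupp.mapDomain (fun p' => p' ≫ q) (Finsupp.mapRange.linearMap φ.hom (Finsupp.single p m))
        simp [Finsupp.mapDomain_single] }
  map_id M := by
    apply NatTrans.ext; funext j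
    apply ModuleCat.hom_ext
    apply Finsupp.lhom_ext; intro p m
    show Finsupp.mapRange.linearMap (𝟙 M : M ⟶ M).hom (Finsupp.single p m) = Finsupp.single p m
    simp [Finsupp.mapRange_single]
  map_comp {M N P} φ ψ := by
    apply NatTrans.ext; funext j
    apply ModuleCat.hom_ext
    apply Finsupp.lhom_ext; intro p m
    show Finsupp.mapRange.linearMap (φ ≫ ψ).hom (Finsupp.single p m)
      = Finsupp.mapRange.linearMap ψ.hom (Finsupp.mapRange.linearMap φ.hom (Finsupp.single p m))
    simp [Finsupp.mapRange_single]

/-- The canonical morphism `m_i(X_i) ⟶ X`, given at each vertex `j` by the maps `X_p`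
over paths `p : i → j`. -/
noncomputable def counitHom (i : V) (X : QRep A V) :
    mObj A V i (X.obj ((Paths.of V).obj i)) ⟶ X where
  app j := ModuleCat.ofHom (Finsupp.lsum ℕ (fun p : (Paths.of V).obj i ⟶ j => (X.map p).hom))
  naturality j l q := by
    apply ModuleCat.hom_ext
    apply Finsupp.lhom_ext
    intro p m
    show Finsupp.lsum ℕ (fun p' : (Paths.of V).obj i ⟶ l => (X.map p').hom)
      (Finsupp.mapDomain (fun p' => p' ≫ q) (Finsupp.single p m)) = X.map q (Finsupp.lsum ℕ _ (Finsupp.single p m))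
    simp [Finsupp.mapDomain_single, Finsupp.lsum_single]

/-- The cokernel of `δ_i(X)`, i.e. `Cok_i(X)`. -/
noncomputable def cokerObj (X : QRep A V) (i : V) : ModuleCat.{0} A :=
  ModuleCat.of A (X.obj ((Paths.of V).obj i) ⧸ LinearMap.range (deltaMap A V X i))

instance : HasFiniteBiproducts (QRep A V) := HasFiniteBiproducts.of_hasFiniteProducts
instance : HasFiniteBiproducts (ModuleCat.{0} A) := HasFiniteBiproducts.of_hasFiniteProducts



attribute [local instance] Fintype.ofFinite Classical.decEq
set_option linter.unusedSectionVars false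

noncomputable def heightV (j : V) : ℕ :=
  Finset.univ.sup (fun a : Σ i : V, Quiver.Path i j => a.2.length)

lemma heightV_lt {l j : V} (α : l ⟶ j) : heightV V l < heightV V j := by
  have key : ∀ a : Σ i : V, Quiver.Path i l, a.2.length < heightV V j := by
    intro a
    have : (a.2.cons α).length ≤ heightV V j :=
      Finset.le_sup (f := fun a : Σ i : V, Quiver.Path i j => a.2.length)
        (Finset.mem_univ ⟨a.1, a.2.cons α⟩)
    simpa [Quiver.Path.length_cons] using Nat.lt_of_lt_of_le (Nat.lt_succ_self _) this
  exact Finset.sup_lt_iff (by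
    have := key ⟨l, Quiver.Path.nil⟩
    exact Nat.pos_of_ne_zero (by omega)) |>.2 (fun a _ => key a)

abbrev SrcV := {i : V // ∀ j : V, IsEmpty (j ⟶ i)}

abbrev IdxV (j : V) := Σ s : SrcV V, Quiver.Path s.1 j

noncomputable def Tmap (X : QRep A V) (j : V) :
    (∀ a : IdxV V j, X.obj ((Paths.of V).obj a.1.1)) →ₗ[A] X.obj ((Paths.of V).obj j) where
  toFun v := ∑ a : IdxV V j, X.map (show (Paths.of V).obj a.1.1 ⟶ (Paths.of V).obj j from a.2) (v a)
  map_add' u v := by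
    rw [← Finset.sum_add_distrib]
    exact Finset.sum_congr rfl fun a _ => by simp
  map_smul' c v := by
    rw [RingHom.id_apply, Finset.smul_sum]
    exact Finset.sum_congr rfl fun a _ => by simp

lemma Tmap_apply (X : QRep A V) (j : V) (v : ∀ a : IdxV V j, X.obj ((Paths.of V).obj a.1.1)) :
    Tmap A V X j v
      = ∑ a : IdxV V j, X.map (show (Paths.of V).obj a.1.1 ⟶ (Paths.of V).obj j from a.2) (v a) := rfl

lemma deltaMap_apply (X : QRep A V) (i : V) (v : ∀ a : (Σ j : V, j ⟶ i), X.obj ((Paths.of V).obj a.1)) :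
    deltaMap A V X i v = ∑ a : (Σ j : V, j ⟶ i), X.map a.2.toPath (v a) := rfl

lemma Tmap_single (X : QRep A V) (j : V) (a : IdxV V j) (x : X.obj ((Paths.of V).obj a.1.1)) :
    Tmap A V X j (Pi.single (M := fun a : IdxV V j => X.obj ((Paths.of V).obj a.1.1)) a x) =
      X.map (show (Paths.of V).obj a.1.1 ⟶ (Paths.of V).obj j from a.2) x := by
  show (∑ b : IdxV V j, X.map (show (Paths.of V).obj b.1.1 ⟶ (Paths.of V).obj j from b.2)
      ((Pi.single (M := fun a : IdxV V j => X.obj ((Paths.of V).obj a.1.1)) a x) b)) = _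
  rw [Fintype.sum_eq_single a]
  · rw [Pi.single_eq_same]
  · intro b hb
    rw [Pi.single_eq_of_ne hb, map_zero]

lemma idx_eq_of_source (j : V) (hj : ∀ l : V, IsEmpty (l ⟶ j)) (a : IdxV V j) :
    a = ⟨⟨j, hj⟩, Quiver.Path.nil⟩ := by
  obtain ⟨⟨s, hs⟩, p⟩ := a
  cases p with
  | nil => rfl
  | cons q α => exact ((hj _).false α).elim

lemma nil_is_id (j : V) : (Quiver.Path.nil : Quiver.Path j j) = 𝟙 ((Paths.of V).obj j) := rfl

lemma T_source (X : QRep A V) (j : V) (hj : ∀ l : V, IsEmpty (l ⟶ j))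
    (v : ∀ a : IdxV V j, X.obj ((Paths.of V).obj a.1.1)) :
    Tmap A V X j v = v ⟨⟨j, hj⟩, Quiver.Path.nil⟩ := by
  show (∑ a : IdxV V j, X.map (show (Paths.of V).obj a.1.1 ⟶ (Paths.of V).obj j from a.2) (v a)) = _
  rw [Fintype.sum_eq_single (⟨⟨j, hj⟩, Quiver.Path.nil⟩ : IdxV V j)
    (fun b hb => (hb (idx_eq_of_source V j hj b)).elim)]
  show X.map (𝟙 ((Paths.of V).obj j)) _ = _
  rw [X.map_id]
  rfl

lemma T_split (X : QRep A V) (j : V) (hj : ¬ ∀ l : V, IsEmpty (l ⟶ j))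
    (v : ∀ a : IdxV V j, X.obj ((Paths.of V).obj a.1.1)) :
    Tmap A V X j v = (deltaMap A V X j) (fun b : Σ l : V, l ⟶ j =>
      Tmap A V X b.1 (fun a : IdxV V b.1 => v ⟨a.1, a.2.cons b.2⟩)) := by
  have hbij : Function.Bijective (fun c : Σ b : Σ l : V, l ⟶ j, IdxV V b.1 =>
      (⟨c.2.1, c.2.2.cons c.1.2⟩ : IdxV V j)) := by
    constructor
    · rintro ⟨⟨l₁, α₁⟩, s₁, p₁⟩ ⟨⟨l₂, α₂⟩, s₂, p₂⟩ h
      have h' : (⟨s₁, p₁.cons α₁⟩ : IdxV V j) = ⟨s₂, p₂.cons α₂⟩ := h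
      injection h' with hs hp
      subst hs
      have hp' := eq_of_heq hp
      injection hp' with h1 h2 h3 h4
      dsimp only at h1
      subst h1
      have h3' := eq_of_heq h3
      have h4' := eq_of_heq h4
      subst h3'
      subst h4'
      rfl
    · rintro ⟨⟨s, hs⟩, p⟩
      cases p with
      | nil => exact absurd hs hj
      | cons q α => exact ⟨⟨⟨_, α⟩, ⟨⟨s, hs⟩, q⟩⟩, rfl⟩
  rw [Tmap_apply, deltaMap_apply]
  rw [← Fintype.sum_bijective _ hbij
    (fun c : Σ b : Σ l : V, l ⟶ j, IdxV V b.1 =>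
      X.map (show (Paths.of V).obj c.2.1.1 ⟶ (Paths.of V).obj j from c.2.2.cons c.1.2)
        (v ⟨c.2.1, c.2.2.cons c.1.2⟩))
    _ (fun c => rfl)]
  rw [← Finset.univ_sigma_univ, Finset.sum_sigma]
  refine Finset.sum_congr rfl fun b _ => ?_
  rw [show (Tmap A V X b.1 (fun a : IdxV V b.1 => v ⟨a.1, a.2.cons b.2⟩)) =
    ∑ a : IdxV V b.1, X.map (show (Paths.of V).obj a.1.1 ⟶ (Paths.of V).obj b.1 from a.2)
      (v ⟨a.1, a.2.cons b.2⟩) from rfl]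
  refine Eq.trans ?_ (map_sum (ConcreteCategory.hom (X.map b.2.toPath)) _ _).symm
  refine Finset.sum_congr rfl fun a _ => ?_
  erw [show (show (Paths.of V).obj a.1.1 ⟶ (Paths.of V).obj j from a.2.cons b.2) =
    (show (Paths.of V).obj a.1.1 ⟶ (Paths.of V).obj b.1 from a.2) ≫ b.2.toPath from rfl, X.map_comp]
  rfl

lemma T_injective (X : QRep A V) (hX : IsMonicRep A V X) (j : V) :
    Function.Injective (Tmap A V X j) := by
  suffices h : ∀ n (j : V), heightV V j ≤ n → Function.Injective (Tmap A V X j) from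
    h (heightV V j) j le_rfl
  intro n
  induction n with
  | zero =>
    intro j hn
    by_cases hj : ∀ l : V, IsEmpty (l ⟶ j)
    · intro v w hvw
      funext a
      have := idx_eq_of_source V j hj a
      subst this
      have h1 := T_source A V X j hj v
      have h2 := T_source A V X j hj w
      rw [h1, h2] at hvw
      exact hvw
    · push_neg at hj
      obtain ⟨l, hl⟩ := hj
      have : ∃ α : l ⟶ j, True := by
        rcases hl with ⟨α⟩
        exact ⟨α, trivial⟩
      obtain ⟨α, -⟩ := this
      exact absurd (Nat.le_zero.mp hn ▸ heightV_lt V α) (by omega)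
  | succ n ih =>
    intro j hn
    by_cases hj : ∀ l : V, IsEmpty (l ⟶ j)
    · intro v w hvw
      funext a
      have := idx_eq_of_source V j hj a
      subst this
      rw [T_source A V X j hj v, T_source A V X j hj w] at hvw
      exact hvw
    · intro v w hvw
      rw [T_split A V X j hj v, T_split A V X j hj w] at hvw
      have h2 := hX j hvw
      funext a
      obtain ⟨⟨s, hs⟩, p⟩ := a
      cases p with
      | nil => exact absurd hs hj
      | @cons m _ q β =>
        have h3 := congrFun h2 ⟨m, β⟩
        have hinj : Function.Injective (Tmap A V X m) := by
          refine ih m ?_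
          have := heightV_lt V β
          omega
        have h4 := hinj h3
        exact congrFun h4 ⟨⟨s, hs⟩, q⟩
section Phi
variable (X : QRep A V)

noncomputable abbrev FF : SrcV V → QRep A V :=
  fun s => mObj A V s.1 (X.obj ((Paths.of V).obj s.1))

noncomputable def phi0 : (⨁ FF A V X) ⟶ X :=
  biproduct.desc (fun s : SrcV V => counitHom A V s.1 X)

noncomputable def piEval (j : V) (x : (⨁ FF A V X).obj ((Paths.of V).obj j)) (a : IdxV V j) :
    X.obj ((Paths.of V).obj a.1.1) :=
  (show ((Paths.of V).obj a.1.1 ⟶ (Paths.of V).obj j) →₀ X.obj ((Paths.of V).obj a.1.1) from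
    (biproduct.π (FF A V X) a.1).app ((Paths.of V).obj j) x) a.2

lemma phi_eq (j : V) (x : (⨁ FF A V X).obj ((Paths.of V).obj j)) :
    (phi0 A V X).app ((Paths.of V).obj j) x =
      Tmap A V X j (piEval A V X j x) := by
  have htot : x = ∑ s : SrcV V,
      (biproduct.ι (FF A V X) s).app ((Paths.of V).obj j)
        ((biproduct.π (FF A V X) s).app ((Paths.of V).obj j) x) := by
    have h := congrArg (fun η : (⨁ FF A V X) ⟶ (⨁ FF A V X) => η.app ((Paths.of V).obj j) x)
      (biproduct.total (f := FF A V X))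
    simp only [NatTrans.app_sum] at h
    change ModuleCat.Hom.hom _ x = _ at h
    rw [ModuleCat.hom_sum, LinearMap.sum_apply] at h
    exact h.symm
  conv_lhs => rw [htot, map_sum]
  have hterm : ∀ s : SrcV V,
      (phi0 A V X).app ((Paths.of V).obj j)
        ((biproduct.ι (FF A V X) s).app ((Paths.of V).obj j)
          ((biproduct.π (FF A V X) s).app ((Paths.of V).obj j) x)) =
      ∑ p : Quiver.Path s.1 j, X.map (show (Paths.of V).obj s.1 ⟶ (Paths.of V).obj j from p)
        (piEval A V X j x ⟨s, p⟩) := by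
    intro s
    have h1 : (biproduct.ι (FF A V X) s).app ((Paths.of V).obj j) ≫
        (phi0 A V X).app ((Paths.of V).obj j) = (counitHom A V s.1 X).app ((Paths.of V).obj j) := by
      rw [← NatTrans.comp_app, phi0, biproduct.ι_desc]
    have h2 := congrArg (fun f => f ((biproduct.π (FF A V X) s).app ((Paths.of V).obj j) x)) h1
    refine Eq.trans h2 ?_
    show (Finsupp.lsum ℕ (fun p : (Paths.of V).obj s.1 ⟶ (Paths.of V).obj j => (X.map p).hom))
      ((biproduct.π (FF A V X) s).app ((Paths.of V).obj j) x) = _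
    letI : Fintype ((Paths.of V).obj s.1 ⟶ (Paths.of V).obj j) :=
      inferInstanceAs (Fintype (Quiver.Path s.1 j))
    erw [Finsupp.lsum_apply, Finsupp.sum_fintype _ _ (fun p => map_zero _)]
    rfl
  rw [Finset.sum_congr rfl (fun s _ => hterm s)]
  rw [Tmap_apply, ← Finset.univ_sigma_univ, Finset.sum_sigma]

lemma x_eq_sum (j : V) (x : (⨁ FF A V X).obj ((Paths.of V).obj j)) :
    x = ∑ s : SrcV V,
      (biproduct.ι (FF A V X) s).app ((Paths.of V).obj j)
        ((biproduct.π (FF A V X) s).app ((Paths.of V).obj j) x) := by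
  have h := congrArg (fun η : (⨁ FF A V X) ⟶ (⨁ FF A V X) => η.app ((Paths.of V).obj j) x)
    (biproduct.total (f := FF A V X))
  simp only [NatTrans.app_sum] at h
  change ModuleCat.Hom.hom _ x = _ at h
  rw [ModuleCat.hom_sum, LinearMap.sum_apply] at h
  exact h.symm

lemma phi_injective (hX : IsMonicRep A V X) (j : V) :
    Function.Injective ((phi0 A V X).app ((Paths.of V).obj j)) := by
  intro x y hxy
  rw [phi_eq, phi_eq] at hxy
  have h1 := T_injective A V X hX j hxy
  have h2 : ∀ s : SrcV V, (biproduct.π (FF A V X) s).app ((Paths.of V).obj j) x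
      = (biproduct.π (FF A V X) s).app ((Paths.of V).obj j) y := by
    intro s
    have key : ∀ p : Quiver.Path s.1 j,
        piEval A V X j x ⟨s, p⟩ = piEval A V X j y ⟨s, p⟩ :=
      fun p => congrFun h1 ⟨s, p⟩
    have e1 : (show ((Paths.of V).obj s.1 ⟶ (Paths.of V).obj j) →₀ X.obj ((Paths.of V).obj s.1) from
        (biproduct.π (FF A V X) s).app ((Paths.of V).obj j) x)
      = (show ((Paths.of V).obj s.1 ⟶ (Paths.of V).obj j) →₀ X.obj ((Paths.of V).obj s.1) from
        (biproduct.π (FF A V X) s).app ((Paths.of V).obj j) y) :=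
      Finsupp.ext (fun p => key p)
    exact e1
  rw [x_eq_sum A V X j x, x_eq_sum A V X j y]
  exact Finset.sum_congr rfl fun s _ => by rw [h2 s]

lemma range_phi (j : V) :
    LinearMap.range ((phi0 A V X).app ((Paths.of V).obj j)).hom = LinearMap.range (Tmap A V X j) := by
  apply le_antisymm
  · rintro _ ⟨x, rfl⟩
    exact ⟨piEval A V X j x, (phi_eq A V X j x).symm⟩
  · rintro _ ⟨v, rfl⟩
    rw [Tmap_apply]
    apply Submodule.sum_mem
    intro a _
    refine ⟨(biproduct.ι (FF A V X) a.1).app ((Paths.of V).obj j)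
      (Finsupp.single (show (Paths.of V).obj a.1.1 ⟶ (Paths.of V).obj j from a.2) (v a)), ?_⟩
    have h1 : (biproduct.ι (FF A V X) a.1).app ((Paths.of V).obj j) ≫
        (phi0 A V X).app ((Paths.of V).obj j) = (counitHom A V a.1.1 X).app ((Paths.of V).obj j) := by
      rw [← NatTrans.comp_app, phi0, biproduct.ι_desc]
    have h2 := congrArg (fun f => f (Finsupp.single
      (show (Paths.of V).obj a.1.1 ⟶ (Paths.of V).obj j from a.2) (v a))) h1
    refine Eq.trans h2 ?_
    show (Finsupp.lsum ℕ (fun p : (Paths.of V).obj a.1.1 ⟶ (Paths.of V).obj j =>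
      (X.map p).hom)) _ = _
    rw [Finsupp.lsum_single]

end Phi

section Zpart
variable {W : QRep A V} (X : QRep A V)

noncomputable def ZFun (η : W ⟶ X) : QRep A V where
  obj j := ModuleCat.of A (X.obj j ⧸ LinearMap.range (η.app j).hom)
  map {j l} q := ModuleCat.ofHom (Submodule.mapQ _ _ (X.map q).hom (by
    rintro _ ⟨w, rfl⟩
    refine Submodule.mem_comap.2 ⟨W.map q w, ?_⟩
    exact congrArg (fun f => f w) (η.naturality q)))
  map_id j := by
    apply ModuleCat.hom_ext
    apply LinearMap.ext
    intro z
    obtain ⟨y, rfl⟩ := Submodule.Quotient.mk_surjective _ z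
    show Submodule.mapQ (LinearMap.range (η.app j).hom) (LinearMap.range (η.app j).hom)
      (X.map (𝟙 j)).hom (by rintro _ ⟨w, rfl⟩; exact ⟨W.map (𝟙 j) w,
        congrArg (fun f => f w) (η.naturality (𝟙 j))⟩) (Submodule.Quotient.mk y)
      = Submodule.Quotient.mk y
    rw [Submodule.mapQ_apply, X.map_id]
    rfl
  map_comp {j l r} q q' := by
    apply ModuleCat.hom_ext
    apply LinearMap.ext
    intro z
    obtain ⟨y, rfl⟩ := Submodule.Quotient.mk_surjective _ z
    show Submodule.mapQ (LinearMap.range (η.app j).hom) (LinearMap.range (η.app r).hom)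
        (X.map (q ≫ q')).hom (by rintro _ ⟨w, rfl⟩; exact ⟨W.map (q ≫ q') w,
          congrArg (fun f => f w) (η.naturality (q ≫ q'))⟩) (Submodule.Quotient.mk y)
      = Submodule.mapQ (LinearMap.range (η.app l).hom) (LinearMap.range (η.app r).hom)
          (X.map q').hom (by rintro _ ⟨w, rfl⟩; exact ⟨W.map q' w,
            congrArg (fun f => f w) (η.naturality q')⟩)
        (Submodule.mapQ (LinearMap.range (η.app j).hom) (LinearMap.range (η.app l).hom)
          (X.map q).hom (by rintro _ ⟨w, rfl⟩; exact ⟨W.map q w,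
            congrArg (fun f => f w) (η.naturality q)⟩) (Submodule.Quotient.mk y))
    rw [Submodule.mapQ_apply, Submodule.mapQ_apply, Submodule.mapQ_apply, X.map_comp]
    rfl

noncomputable def psiHom (η : W ⟶ X) : X ⟶ ZFun A V X η where
  app j := ModuleCat.ofHom (LinearMap.range (η.app j).hom).mkQ
  naturality j l q := by
    apply ModuleCat.hom_ext
    apply LinearMap.ext
    intro y
    show Submodule.Quotient.mk (p := LinearMap.range (η.app l).hom) (X.map q y)
      = Submodule.mapQ (LinearMap.range (η.app j).hom) (LinearMap.range (η.app l).hom)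
          (X.map q).hom (by rintro _ ⟨w, rfl⟩; exact ⟨W.map q w,
            congrArg (fun f => f w) (η.naturality q)⟩) (Submodule.Quotient.mk y)
    rw [Submodule.mapQ_apply]

end Zpart

section Final
variable (X : QRep A V)

lemma Z_source (i : V) (hi : ∀ l : V, IsEmpty (l ⟶ i)) :
    Subsingleton ((ZFun A V X (phi0 A V X)).obj ((Paths.of V).obj i)) := by
  have htop : LinearMap.range ((phi0 A V X).app ((Paths.of V).obj i)).hom = ⊤ := by
    rw [range_phi, eq_top_iff]
    rintro y -
    refine ⟨Pi.single (M := fun a : IdxV V i => X.obj ((Paths.of V).obj a.1.1))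
      ⟨⟨i, hi⟩, Quiver.Path.nil⟩ y, ?_⟩
    rw [T_source A V X i hi]
    exact Pi.single_eq_same _ _
  exact Submodule.Quotient.subsingleton_iff.mpr htop

lemma Z_monic (hX : IsMonicRep A V X) : IsMonicRep A V (ZFun A V X (phi0 A V X)) := by
  intro i
  rw [injective_iff_map_eq_zero]
  intro v hv
  by_cases hi : ∀ l : V, IsEmpty (l ⟶ i)
  · funext b
    exact ((hi b.1).false b.2).elim
  · choose x hx using fun b : Σ l : V, l ⟶ i =>
      Submodule.Quotient.mk_surjective
        (LinearMap.range ((phi0 A V X).app ((Paths.of V).obj b.1)).hom) (v b)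
    have h1 : deltaMap A V (ZFun A V X (phi0 A V X)) i v =
        Submodule.Quotient.mk (p := LinearMap.range ((phi0 A V X).app ((Paths.of V).obj i)).hom)
          (deltaMap A V X i x) := by
      rw [deltaMap_apply, deltaMap_apply]
      erw [show Submodule.Quotient.mk (p := LinearMap.range ((phi0 A V X).app ((Paths.of V).obj i)).hom)
        (∑ b : Σ l : V, l ⟶ i, X.map b.2.toPath (x b))
        = (LinearMap.range ((phi0 A V X).app ((Paths.of V).obj i)).hom).mkQ
            (∑ b : Σ l : V, l ⟶ i, X.map b.2.toPath (x b)) from rfl, map_sum]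
      refine Finset.sum_congr rfl fun b _ => ?_
      rw [← hx b]
      show Submodule.mapQ (LinearMap.range ((phi0 A V X).app ((Paths.of V).obj b.1)).hom)
        (LinearMap.range ((phi0 A V X).app ((Paths.of V).obj i)).hom)
        (X.map b.2.toPath).hom (by rintro _ ⟨w, rfl⟩; exact ⟨(⨁ FF A V X).map b.2.toPath w,
          congrArg (fun f => f w) ((phi0 A V X).naturality b.2.toPath)⟩)
        (Submodule.Quotient.mk (x b))
        = (LinearMap.range ((phi0 A V X).app ((Paths.of V).obj i)).hom).mkQ (X.map b.2.toPath (x b))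
      erw [Submodule.mapQ_apply]
    erw [h1, Submodule.Quotient.mk_eq_zero, range_phi] at hv
    obtain ⟨u, hu⟩ := hv
    rw [T_split A V X i hi u] at hu
    have h2 := hX i hu
    funext b
    erw [Pi.zero_apply, ← hx b, Submodule.Quotient.mk_eq_zero, range_phi]
    exact ⟨fun a : IdxV V b.1 => u ⟨a.1, a.2.cons b.2⟩, congrFun h2 b⟩

end Final

/-- For every monic `X` there is a short exact sequence
`0 → ⊕_{i ∈ S} mᵢ(Xᵢ) → X → Z → 0`, where `S` is the set of sources, the first morphism
is given at each vertex by the maps `X_p`, the cokernel `Z` is monic, and `Zᵢ = 0` for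
every source `i`. -/
theorem source_exact_sequence
    (k : Type) [Field k] [Algebra k A] [FiniteDimensional k A]
    (X : QRep A V) (hX : IsMonicRep A V X) (hfin : IsFinRep A V X) :
    ∀ φ : (⨁ fun s : {i : V // ∀ j : V, IsEmpty (j ⟶ i)} =>
            mObj A V s.1 (X.obj ((Paths.of V).obj s.1))) ⟶ X,
      φ = biproduct.desc (fun s : {i : V // ∀ j : V, IsEmpty (j ⟶ i)} => counitHom A V s.1 X) →
      ∃ (Z : QRep A V) (ψ : X ⟶ Z),
        (∀ j : Paths V, Function.Injective (φ.app j)) ∧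
        (∀ j : Paths V, Function.Exact (φ.app j) (ψ.app j)) ∧
        (∀ j : Paths V, Function.Surjective (ψ.app j)) ∧
        IsMonicRep A V Z ∧
        ∀ i : V, (∀ j : V, IsEmpty (j ⟶ i)) → Subsingleton (Z.obj ((Paths.of V).obj i)) := by
  intro φ hφ
  subst hφ
  refine ⟨ZFun A V X (phi0 A V X), psiHom A V X (phi0 A V X), ?_, ?_, ?_, ?_, ?_⟩
  · intro j
    exact phi_injective A V X hX j
  · intro j
    exact LinearMap.exact_iff.mpr (Submodule.ker_mkQ _)
  · intro j
    exact Submodule.mkQ_surjective _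
  · exact Z_monic A V X hX
  · intro i hi
    exact Z_source A V X i hi
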